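/- (Fermionic decomposition of the Ising transfer matrix.) Let ε_y ∈ {+1,−1} and define the Ising transfer matrix V = (2 sinh 2K_x)^{N/2} · V_y^{1/2}·V_x^{spin}·V_y^{1/2}, where V_x^{spin} = exp(K*_x ∑_{j=0}^{N−1} C_j) and V_y^{1/2} = exp((K_y/2) ∑_{j=0}^{N−1} s_j s_{j+1}) with the convention s_N = ε_y s_0 (matrix exponentials). Then V = (2 sinh 2K_x)^{N/2} · [ ((1 + ε_y U)/2)·V_a + ((1 − ε_y U)/2)·V_p ]. -/

import Mathlib

open Finset Matrix

noncomputable section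

/-- Pauli matrix σ_x. -/
def pauliX : Matrix (Fin 2) (Fin 2) ℂ := !![0, 1; 1, 0]

/-- Pauli matrix σ_y. -/
def pauliY : Matrix (Fin 2) (Fin 2) ℂ := !![0, -Complex.I; Complex.I, 0]

/-- Pauli matrix σ_z. -/
def pauliZ : Matrix (Fin 2) (Fin 2) ℂ := !![1, 0; 0, -1]

/-- Operators on (ℂ²)^{⊗N} ≅ ℂ^{2^N}, realized as matrices indexed by spin configurations. -/
abbrev SpinOp (N : ℕ) := Matrix (Fin N → Fin 2) (Fin N → Fin 2) ℂ

/-- Tensor product w_0 ⊗ w_1 ⊗ ⋯ ⊗ w_{N−1} of one-site matrices. -/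
def tensorOp {N : ℕ} (w : Fin N → Matrix (Fin 2) (Fin 2) ℂ) : SpinOp N :=
  Matrix.of fun a b => ∏ k : Fin N, w k (a k) (b k)

/-- s_j = 1^{⊗j} ⊗ σ_z ⊗ 1^{⊗(N−1−j)}. -/
def sOp {N : ℕ} (j : Fin N) : SpinOp N :=
  tensorOp fun k => if k = j then pauliZ else 1

/-- C_j = 1^{⊗j} ⊗ σ_x ⊗ 1^{⊗(N−1−j)}. -/
def COp {N : ℕ} (j : Fin N) : SpinOp N :=
  tensorOp fun k => if k = j then pauliX else 1

/-- p_j = σ_x^{⊗j} ⊗ σ_z ⊗ 1^{⊗(N−1−j)}. -/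
def pOp {N : ℕ} (j : Fin N) : SpinOp N :=
  tensorOp fun k => if k < j then pauliX else if k = j then pauliZ else 1

/-- q_j = σ_x^{⊗j} ⊗ σ_y ⊗ 1^{⊗(N−1−j)}. -/
def qOp {N : ℕ} (j : Fin N) : SpinOp N :=
  tensorOp fun k => if k < j then pauliX else if k = j then pauliY else 1

/-- V_x = exp(iK*_x ∑_j p_j q_j) (matrix exponential). -/
def Vx (N : ℕ) (Kxs : ℝ) : SpinOp N :=
  NormedSpace.exp ((Complex.I * (Kxs : ℂ)) • ∑ j : Fin N, pOp j * qOp j)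

/-- p_{j+1}, with the convention p_N = ε·p_0 (ε = −1 for ν = a, ε = +1 for ν = p). -/
def pNext (N : ℕ) [NeZero N] (ε : ℂ) (j : Fin N) : SpinOp N :=
  if (j : ℕ) + 1 = N then ε • pOp (0 : Fin N) else pOp (j + 1)

/-- V_{y,ν}^{1/2} = exp(−(i/2)K_y ∑_j p_{j+1} q_j). -/
def VyHalf (N : ℕ) [NeZero N] (Ky : ℝ) (ε : ℂ) : SpinOp N :=
  NormedSpace.exp ((-(Complex.I / 2) * (Ky : ℂ)) • ∑ j : Fin N, pNext N ε j * qOp j)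

/-- V_ν = V_{y,ν}^{1/2}·V_x·V_{y,ν}^{1/2} (ε = −1 for ν = a, ε = +1 for ν = p). -/
def Vnu (N : ℕ) [NeZero N] (Kxs Ky : ℝ) (ε : ℂ) : SpinOp N :=
  VyHalf N Ky ε * Vx N Kxs * VyHalf N Ky ε

/-- s_{j+1}, with the convention s_N = ε_y·s_0. -/
def sNext (N : ℕ) [NeZero N] (ε : ℂ) (j : Fin N) : SpinOp N :=
  if (j : ℕ) + 1 = N then ε • sOp (0 : Fin N) else sOp (j + 1)

/-- The global spin flip U = C_0·C_1·⋯·C_{N−1}. -/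
def Uflip (N : ℕ) : SpinOp N :=
  ((List.finRange N).map fun j => COp j).prod

/-- V_x^{spin} = exp(K*_x ∑_j C_j). -/
def VxSpin (N : ℕ) (Kxs : ℝ) : SpinOp N :=
  NormedSpace.exp (((Kxs : ℝ) : ℂ) • ∑ j : Fin N, COp j)

/-- V_y^{1/2} = exp((K_y/2) ∑_j s_j s_{j+1}), with s_N = ε_y·s_0. -/
def VySpinHalf (N : ℕ) [NeZero N] (Ky : ℝ) (ε : ℂ) : SpinOp N :=
  NormedSpace.exp (((Ky / 2 : ℝ) : ℂ) • ∑ j : Fin N, sOp j * sNext N ε j)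


section Aux

variable {N : ℕ}

private lemma hXX : pauliX * pauliX = 1 := by
  ext i j; fin_cases i <;> fin_cases j <;>
    simp [pauliX, Matrix.mul_apply, Fin.sum_univ_two, Matrix.one_apply]

private lemma hZZ : pauliZ * pauliZ = 1 := by
  ext i j; fin_cases i <;> fin_cases j <;>
    simp [pauliZ, Matrix.mul_apply, Fin.sum_univ_two, Matrix.one_apply]

private lemma hZY : pauliZ * pauliY = (-Complex.I) • pauliX := by
  ext i j; fin_cases i <;> fin_cases j <;>
    simp [pauliZ, pauliY, pauliX, Matrix.mul_apply, Fin.sum_univ_two, Matrix.smul_apply]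

private lemma hXY : pauliX * pauliY = Complex.I • pauliZ := by
  ext i j; fin_cases i <;> fin_cases j <;>
    simp [pauliZ, pauliY, pauliX, Matrix.mul_apply, Fin.sum_univ_two, Matrix.smul_apply]

private lemma hZX : pauliZ * pauliX = Complex.I • pauliY := by
  ext i j; fin_cases i <;> fin_cases j <;>
    simp [pauliZ, pauliY, pauliX, Matrix.mul_apply, Fin.sum_univ_two, Matrix.smul_apply]

private lemma hXZ : pauliX * pauliZ = (-Complex.I) • pauliY := by
  ext i j; fin_cases i <;> fin_cases j <;>
    simp [pauliZ, pauliY, pauliX, Matrix.mul_apply, Fin.sum_univ_two, Matrix.smul_apply]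

private lemma tensorOp_mul (w v : Fin N → Matrix (Fin 2) (Fin 2) ℂ) :
    tensorOp w * tensorOp v = tensorOp (fun k => w k * v k) := by
  ext a b
  simp only [tensorOp, Matrix.mul_apply, Matrix.of_apply]
  rw [Finset.prod_univ_sum, Fintype.piFinset_univ]
  exact Finset.sum_congr rfl fun c _ => Finset.prod_mul_distrib.symm

private lemma tensorOp_one :
    tensorOp (fun _ => (1 : Matrix (Fin 2) (Fin 2) ℂ)) = (1 : SpinOp N) := by
  ext a b
  simp only [tensorOp, Matrix.of_apply, Matrix.one_apply, Finset.prod_boole]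
  simp [funext_iff]

private lemma tensorOp_smul_congr {f g : Fin N → Matrix (Fin 2) (Fin 2) ℂ} (c : ℂ)
    (d : Fin N → ℂ) (hc : ∏ k, d k = c) (h : ∀ k, f k = d k • g k) :
    tensorOp f = c • tensorOp g := by
  ext a b
  simp only [tensorOp, Matrix.of_apply, Matrix.smul_apply, smul_eq_mul, ← hc,
    ← Finset.prod_mul_distrib]
  exact Finset.prod_congr rfl fun k _ => by rw [h k]; simp

private lemma prod_ite_one (j : Fin N) (c : ℂ) :
    (∏ k : Fin N, if k = j then c else 1) = c := by
  simp [Finset.prod_ite_eq']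

private lemma pq_same (j : Fin N) : pOp j * qOp j = (-Complex.I) • COp j := by
  rw [pOp, qOp, COp, tensorOp_mul]
  refine tensorOp_smul_congr _ (fun k => if k = j then -Complex.I else 1) (prod_ite_one j _) ?_
  intro k
  by_cases h1 : k = j
  · subst h1; simp [lt_irrefl, hZY]
  · by_cases h2 : k < j
    · simp [h1, h2, hXX]
    · simp [h1, h2]

private lemma pq_adj (j i : Fin N) (h : (i : ℕ) = (j : ℕ) + 1) :
    pOp i * qOp j = Complex.I • (sOp j * sOp i) := by
  have hji : j < i := by rw [Fin.lt_def]; omega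
  have hne : i ≠ j := by simp [Fin.ext_iff]; omega
  rw [pOp, qOp, sOp, sOp, tensorOp_mul, tensorOp_mul]
  refine tensorOp_smul_congr _ (fun k => if k = j then Complex.I else 1) (prod_ite_one j _) ?_
  intro k
  by_cases h1 : k = j
  · subst h1
    simp [hji, lt_irrefl, hne.symm, (by simp [Fin.ext_iff]; omega : k ≠ i), hXY]
  · by_cases h2 : k = i
    · subst h2
      simp [lt_irrefl, h1, (by rw [Fin.lt_def]; omega : ¬ k < j)]
    · have h1' : (k : ℕ) ≠ (j : ℕ) := fun hh => h1 (Fin.ext hh)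
      have h2' : (k : ℕ) ≠ (i : ℕ) := fun hh => h2 (Fin.ext hh)
      by_cases h3 : k < j
      · simp [h1, h2, h3, (by rw [Fin.lt_def] at h3 ⊢; omega : k < i), hXX]
      · rw [Fin.lt_def] at h3
        simp [h1, h2, (by rw [Fin.lt_def]; omega : ¬ k < j),
          (by rw [Fin.lt_def]; omega : ¬ k < i)]

private lemma listprod_COp (l : List (Fin N)) (hl : l.Nodup) :
    ((l.map fun j => COp j).prod) = tensorOp (fun k => if k ∈ l then pauliX else 1) := by
  induction l with
  | nil => simpa using tensorOp_one.symm
  | cons j l ih =>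
    obtain ⟨hj, hl'⟩ := List.nodup_cons.mp hl
    rw [List.map_cons, List.prod_cons, ih hl', COp, tensorOp_mul]
    have : (fun k => (if k = j then pauliX else 1) * (if k ∈ l then pauliX else 1))
        = fun k => if k ∈ j :: l then pauliX else 1 := by
      funext k
      by_cases h1 : k = j
      · subst h1; simp [hj]
      · simp [h1, List.mem_cons]
    rw [this]

private lemma Uflip_eq : Uflip N = tensorOp (fun _ => pauliX) := by
  rw [Uflip, listprod_COp _ (List.nodup_finRange N)]
  simp [List.mem_finRange]

private lemma Uflip_sq : Uflip N * Uflip N = 1 := by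
  rw [Uflip_eq, tensorOp_mul]
  simpa [hXX] using tensorOp_one

private lemma comm_U_ss (a b : Fin N) :
    Uflip N * (sOp a * sOp b) = (sOp a * sOp b) * Uflip N := by
  rw [Uflip_eq, sOp, sOp]
  simp only [tensorOp_mul]
  have hd : ((∏ k : Fin N, ((if k = a then (-1:ℂ) else 1) * (if k = b then (-1:ℂ) else 1)))) = 1 := by
    rw [Finset.prod_mul_distrib, prod_ite_one, prod_ite_one]; norm_num
  rw [tensorOp_smul_congr 1
    (fun k => (if k = a then (-1:ℂ) else 1) * (if k = b then (-1:ℂ) else 1)) hd ?_, one_smul]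
  intro k
  by_cases h1 : k = a <;> by_cases h2 : k = b
  · simp only [if_pos h1, if_pos h2, hZZ, mul_one, one_mul]
    norm_num
  · simp only [if_pos h1, if_neg h2, mul_one, one_mul]
    rw [hXZ, hZX, smul_smul, neg_one_mul]
  · simp only [if_neg h1, if_pos h2, mul_one, one_mul]
    rw [hXZ, hZX, smul_smul, neg_one_mul]
  · simp [if_neg h1, if_neg h2]

private lemma comm_U_C (j : Fin N) : Uflip N * COp j = COp j * Uflip N := by
  rw [Uflip_eq, COp]
  simp only [tensorOp_mul]
  have : (fun k => pauliX * (if k = j then pauliX else 1))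
      = fun k => (if k = j then pauliX else 1) * pauliX := by
    funext k; by_cases h1 : k = j <;> simp [h1]
  rw [this]

private lemma pq_last [NeZero N] (lst : Fin N) (hlstv : (lst : ℕ) = N - 1) :
    pOp 0 * qOp lst = (-Complex.I) • (Uflip N * (sOp lst * sOp 0)) := by
  rw [pOp, qOp, sOp, sOp, Uflip_eq]
  simp only [tensorOp_mul]
  have hprod : ((∏ k : Fin N, ((if k = (0 : Fin N) then (-1:ℂ) else 1)
      * (if k = lst then Complex.I else 1)))) = -Complex.I := by
    rw [Finset.prod_mul_distrib, prod_ite_one, prod_ite_one]; ring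
  refine tensorOp_smul_congr _ _ hprod ?_
  intro k
  have hk0 : ¬ k < (0 : Fin N) := by rw [Fin.lt_def, Fin.val_zero]; omega
  by_cases h1 : k = 0
  · by_cases h2 : k = lst
    · have hkl : ¬ k < lst := by rw [h2]; exact lt_irrefl _
      simp only [if_neg hk0, if_pos h1, if_neg hkl, if_pos h2, one_mul, mul_one]
      rw [hZZ, mul_one, hZY, neg_one_mul]
    · have hl0 : lst ≠ 0 := fun hh => h2 (h1.trans hh.symm)
      have hkl : k < lst := by
        rw [Fin.lt_def, hlstv]
        have h1' : (k : ℕ) = 0 := by rw [h1, Fin.val_zero]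
        have hl0' : (lst : ℕ) ≠ 0 := fun hh => hl0 (Fin.ext (by rw [hh, Fin.val_zero]))
        rw [hlstv] at hl0'
        omega
      simp only [if_neg hk0, if_pos h1, if_pos hkl, if_neg h2, one_mul, mul_one]
      rw [hZX, hXZ, smul_smul, neg_one_mul, neg_neg]
  · by_cases h2 : k = lst
    · have hkl : ¬ k < lst := by rw [h2]; exact lt_irrefl _
      simp only [if_neg hk0, if_neg h1, if_neg hkl, if_pos h2, one_mul, mul_one]
      rw [hXZ, smul_smul]
      simp [mul_neg, Complex.I_mul_I]
    · have h2' : (k : ℕ) ≠ (lst : ℕ) := fun hh => h2 (Fin.ext hh)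
      rw [hlstv] at h2'
      have hkl : k < lst := by rw [Fin.lt_def, hlstv]; have := k.isLt; omega
      simp [hk0, h1, h2, hkl]

end Aux

section Main

variable {N : ℕ} [NeZero N]

/-- The last site index. -/
def lastF (N : ℕ) [NeZero N] : Fin N := ⟨N - 1, by have := NeZero.ne N; omega⟩

/-- Bulk part of the bond sum. -/
def Ssum (N : ℕ) [NeZero N] : SpinOp N :=
  ∑ j ∈ Finset.univ.erase (lastF N), sOp j * sOp (j + 1)

/-- Boundary bond. -/
def Ebond (N : ℕ) [NeZero N] : SpinOp N := sOp (lastF N) * sOp 0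

private lemma lastF_val : ((lastF N : Fin N) : ℕ) = N - 1 := rfl

private lemma lastF_succ : ((lastF N : Fin N) : ℕ) + 1 = N := by
  have := NeZero.ne N; rw [lastF_val]; omega

private lemma erase_ne_last {j : Fin N} (hj : j ∈ Finset.univ.erase (lastF N)) :
    (j : ℕ) + 1 < N := by
  have h1 : j ≠ lastF N := Finset.ne_of_mem_erase hj
  have h2 : (j : ℕ) ≠ N - 1 := fun hh => h1 (Fin.ext hh)
  have := j.isLt
  omega

private lemma val_add_one {j : Fin N} (hj : (j : ℕ) + 1 < N) :
    (((j + 1) : Fin N) : ℕ) = (j : ℕ) + 1 := by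
  rw [Fin.add_def, Fin.val_one' N]
  have := j.isLt
  have h2 : 1 % N = 1 := Nat.mod_eq_of_lt (by omega)
  rw [h2]
  exact Nat.mod_eq_of_lt hj

private lemma sum_spin (ε : ℂ) :
    ∑ j : Fin N, sOp j * sNext N ε j = ε • Ebond N + Ssum N := by
  rw [Ssum, Ebond, ← Finset.add_sum_erase Finset.univ _ (Finset.mem_univ (lastF N))]
  congr 1
  · rw [sNext, if_pos lastF_succ, mul_smul_comm]
  · refine Finset.sum_congr rfl fun j hj => ?_
    rw [sNext, if_neg (by have := erase_ne_last hj; omega)]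

private lemma sum_ferm (ε : ℂ) :
    ∑ j : Fin N, pNext N ε j * qOp j
      = (ε * (-Complex.I)) • (Uflip N * Ebond N) + Complex.I • Ssum N := by
  rw [Ssum, Ebond, ← Finset.add_sum_erase Finset.univ _ (Finset.mem_univ (lastF N))]
  congr 1
  · rw [pNext, if_pos lastF_succ, smul_mul_assoc, pq_last (lastF N) lastF_val, smul_smul]
  · rw [Finset.smul_sum]
    refine Finset.sum_congr rfl fun j hj => ?_
    rw [pNext, if_neg (by have := erase_ne_last hj; omega),
      pq_adj j (j + 1) (val_add_one (erase_ne_last hj))]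

private lemma comm_U_Ssum : Commute (Uflip N) (Ssum N) := by
  unfold Ssum
  exact Commute.sum_right _ _ _ (fun j _ => comm_U_ss j (j + 1))

private lemma comm_U_Ebond : Commute (Uflip N) (Ebond N) := comm_U_ss _ _

omit [NeZero N] in
private lemma mul_exp_eq (e a b : SpinOp N) (he : e * e = e) (ha : Commute e a)
    (hb : Commute e b) (hab : e * a = e * b) :
    e * NormedSpace.exp a = e * NormedSpace.exp b := by
  letI : SeminormedRing (SpinOp N) := Matrix.linftyOpSemiNormedRing
  letI : NormedRing (SpinOp N) := Matrix.linftyOpNormedRing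
  letI : NormedAlgebra ℂ (SpinOp N) := Matrix.linftyOpNormedAlgebra
  have h1 : ∀ (x : SpinOp N), Commute e x → ∀ m : ℕ, e * x ^ (m + 1) = (e * x) ^ (m + 1) := by
    intro x hx m
    induction m with
    | zero => simp
    | succ m ih =>
      have h2 : e * x ^ (m + 1) * e = e * x ^ (m + 1) := by
        rw [mul_assoc, ← (hx.pow_right (m + 1)).eq, ← mul_assoc, he]
      rw [pow_succ (e * x), ← ih, pow_succ x, ← mul_assoc, ← mul_assoc, h2]
  have key : ∀ n : ℕ, e * a ^ n = e * b ^ n := by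
    intro n
    cases n with
    | zero => simp
    | succ n => rw [h1 a ha n, h1 b hb n, hab]
  rw [NormedSpace.exp_eq_tsum (𝕂 := ℂ)]; beta_reduce
  erw [← (NormedSpace.expSeries_summable' (𝕂 := ℂ) a).tsum_mul_left e,
      ← (NormedSpace.expSeries_summable' (𝕂 := ℂ) b).tsum_mul_left e]
  exact tsum_congr fun n => by rw [mul_smul_comm, mul_smul_comm, key n]

omit [NeZero N] in
private lemma proj_idem (U : SpinOp N) (η : ℂ) (hU : U * U = 1) (hη : η * η = 1) :
    ((2 : ℂ)⁻¹ • ((1 : SpinOp N) + η • U)) * ((2 : ℂ)⁻¹ • (1 + η • U))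
      = (2 : ℂ)⁻¹ • (1 + η • U) := by
  have hx : (η • U) * (η • U) = (1 : SpinOp N) := by
    rw [smul_mul_smul_comm, hU, hη, one_smul]
  rw [smul_mul_assoc, mul_smul_comm, smul_smul, mul_add, mul_one, add_mul, one_mul, hx]
  module

omit [NeZero N] in
private lemma proj_idem' (U : SpinOp N) (η : ℂ) (hU : U * U = 1) (hη : η * η = 1) :
    ((2 : ℂ)⁻¹ • ((1 : SpinOp N) - η • U)) * ((2 : ℂ)⁻¹ • (1 - η • U))
      = (2 : ℂ)⁻¹ • (1 - η • U) := by
  have hx : (η • U) * (η • U) = (1 : SpinOp N) := by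
    rw [smul_mul_smul_comm, hU, hη, one_smul]
  rw [smul_mul_assoc, mul_smul_comm, smul_smul, mul_sub, mul_one, sub_mul, one_mul, hx]
  module

omit [NeZero N] in
private lemma proj_mul_U (U : SpinOp N) (η : ℂ) (hU : U * U = 1) (hη : η * η = 1) :
    ((2 : ℂ)⁻¹ • ((1 : SpinOp N) + η • U)) * U
      = η • ((2 : ℂ)⁻¹ • ((1 : SpinOp N) + η • U)) := by
  rw [smul_mul_assoc, add_mul, one_mul, smul_mul_assoc, hU]
  match_scalars
  all_goals first
    | ring1
    | linear_combination (-(2⁻¹) : ℂ) * hη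
    | linear_combination ((2⁻¹) : ℂ) * hη

omit [NeZero N] in
private lemma proj_mul_U' (U : SpinOp N) (η : ℂ) (hU : U * U = 1) (hη : η * η = 1) :
    ((2 : ℂ)⁻¹ • ((1 : SpinOp N) - η • U)) * U
      = (-η) • ((2 : ℂ)⁻¹ • ((1 : SpinOp N) - η • U)) := by
  rw [smul_mul_assoc, sub_mul, one_mul, smul_mul_assoc, hU]
  match_scalars
  all_goals first
    | ring1
    | linear_combination (-(2⁻¹) : ℂ) * hη
    | linear_combination ((2⁻¹) : ℂ) * hη

omit [NeZero N] in
private lemma proj_exponent (e Um Em Sm : SpinOp N) (cc ηc ε μ : ℂ)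
    (heU : e * Um = μ • e) (hscal : -(cc * ε) * μ = cc * ηc) :
    e * ((cc * ηc) • Em + cc • Sm) = e * ((-(cc * ε)) • (Um * Em) + cc • Sm) := by
  have h1 : e * ((-(cc * ε)) • (Um * Em)) = (cc * ηc) • (e * Em) := by
    rw [mul_smul_comm, ← mul_assoc, heU, smul_mul_assoc, smul_smul, hscal]
  rw [mul_add, mul_add, h1, mul_smul_comm]

omit [NeZero N] in
private lemma proj_conj (e g f x : SpinOp N) (hg : Commute e g) (hf : Commute e f)
    (hx : Commute e x) (hgf : e * NormedSpace.exp g = e * NormedSpace.exp f) :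
    e * (NormedSpace.exp g * x * NormedSpace.exp g)
      = e * (NormedSpace.exp f * x * NormedSpace.exp f) := by
  have hge : Commute e (NormedSpace.exp g) := hg.exp_right
  have hfe : Commute e (NormedSpace.exp f) := hf.exp_right
  set G := NormedSpace.exp g with hG
  set F := NormedSpace.exp f with hF
  calc e * (G * x * G) = (e * G) * (x * G) := by rw [mul_assoc, mul_assoc]
    _ = (e * F) * (x * G) := by rw [hgf]
    _ = F * ((e * x) * G) := by rw [hfe.eq, mul_assoc, mul_assoc]
    _ = F * (x * (e * G)) := by rw [hx.eq, mul_assoc]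
    _ = F * (x * (e * F)) := by rw [hgf]
    _ = F * (x * (F * e)) := by rw [hfe.eq]
    _ = (F * x * F) * e := by rw [mul_assoc, mul_assoc]
    _ = e * (F * x * F) := ((hfe.mul_right hx).mul_right hfe).eq.symm

end Main

/-- Fermionic decomposition of the Ising transfer matrix:
(2 sinh 2K_x)^{N/2}·V_y^{1/2}·V_x^{spin}·V_y^{1/2}
  = (2 sinh 2K_x)^{N/2}·[((1+ε_y U)/2)·V_a + ((1−ε_y U)/2)·V_p]. -/
theorem transfer_matrix_fermionic_decomposition
    (N : ℕ) [NeZero N] (Kx Ky Kxs : ℝ)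
    (hKx : 0 < Kx) (hKy : 0 < Ky)
    (hKxs_pos : 0 < Kxs) (hKxs : Real.tanh Kxs = Real.exp (-(2 * Kx)))
    (εy : ℝ) (hεy : εy = 1 ∨ εy = -1) :
    (((2 * Real.sinh (2 * Kx)) ^ ((N : ℝ) / 2) : ℝ) : ℂ) •
        (VySpinHalf N Ky (εy : ℂ) * VxSpin N Kxs * VySpinHalf N Ky (εy : ℂ)) =
      (((2 * Real.sinh (2 * Kx)) ^ ((N : ℝ) / 2) : ℝ) : ℂ) •
        ((2 : ℂ)⁻¹ • ((1 : SpinOp N) + ((εy : ℝ) : ℂ) • Uflip N) * Vnu N Kxs Ky (-1) +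
          (2 : ℂ)⁻¹ • ((1 : SpinOp N) - ((εy : ℝ) : ℂ) • Uflip N) * Vnu N Kxs Ky 1) := by
  have hη : ((εy : ℝ) : ℂ) * ((εy : ℝ) : ℂ) = 1 := by
    rcases hεy with h | h <;> rw [h] <;> norm_num
  congr 1
  set η : ℂ := ((εy : ℝ) : ℂ) with hηdef
  set U : SpinOp N := Uflip N with hUdef
  set P : SpinOp N := (2 : ℂ)⁻¹ • ((1 : SpinOp N) + η • U) with hPdef
  set Q : SpinOp N := (2 : ℂ)⁻¹ • ((1 : SpinOp N) - η • U) with hQdef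
  set x : SpinOp N := VxSpin N Kxs with hxdef
  -- exponent computations
  have hGspin : VySpinHalf N Ky η
      = NormedSpace.exp ((((Ky / 2 : ℝ) : ℂ) * η) • Ebond N + ((Ky / 2 : ℝ) : ℂ) • Ssum N) := by
    rw [VySpinHalf, sum_spin, smul_add, smul_smul]
  have hGferm : ∀ ε : ℂ, VyHalf N Ky ε
      = NormedSpace.exp ((-(((Ky / 2 : ℝ) : ℂ) * ε)) • (U * Ebond N)
          + ((Ky / 2 : ℝ) : ℂ) • Ssum N) := by
    intro ε
    have e1 : (-(Complex.I / 2) * (Ky : ℂ)) * (ε * -Complex.I) = -(((Ky / 2 : ℝ) : ℂ) * ε) := by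
      push_cast
      linear_combination (((Ky : ℂ) * ε) / 2) * Complex.I_sq
    have e2 : (-(Complex.I / 2) * (Ky : ℂ)) * Complex.I = ((Ky / 2 : ℝ) : ℂ) := by
      push_cast
      linear_combination (-(Ky : ℂ) / 2) * Complex.I_sq
    rw [VyHalf, sum_ferm, smul_add, smul_smul, smul_smul, e1, e2, hUdef]
  have hVx : Vx N Kxs = x := by
    rw [Vx, hxdef, VxSpin]
    congr 1
    rw [Finset.sum_congr rfl (fun j _ => pq_same j), ← Finset.smul_sum, smul_smul]
    congr 1
    linear_combination (-(Kxs : ℂ)) * Complex.I_sq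
  -- commutation facts
  have hUU : U * U = 1 := Uflip_sq
  have hUS : Commute U (Ssum N) := comm_U_Ssum
  have hUE : Commute U (Ebond N) := comm_U_Ebond
  have hUUE : Commute U (U * Ebond N) := (Commute.refl U).mul_right hUE
  have hUGspin : Commute U ((((Ky / 2 : ℝ) : ℂ) * η) • Ebond N + ((Ky / 2 : ℝ) : ℂ) • Ssum N) :=
    (hUE.smul_right _).add_right (hUS.smul_right _)
  have hUGferm : ∀ ε : ℂ,
      Commute U ((-(((Ky / 2 : ℝ) : ℂ) * ε)) • (U * Ebond N) + ((Ky / 2 : ℝ) : ℂ) • Ssum N) :=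
    fun ε => (hUUE.smul_right _).add_right (hUS.smul_right _)
  have hUx : Commute U x := by
    rw [hxdef, VxSpin]
    exact ((Commute.sum_right _ _ _ (fun j _ => comm_U_C j)).smul_right _).exp_right
  have hPz : ∀ z : SpinOp N, Commute U z → Commute P z := fun z hz =>
    ((Commute.one_left z).add_left (hz.smul_left η)).smul_left _
  have hQz : ∀ z : SpinOp N, Commute U z → Commute Q z := fun z hz =>
    ((Commute.one_left z).sub_left (hz.smul_left η)).smul_left _
  -- projector algebra
  have hP2 : P * P = P := proj_idem U η hUU hη
  have hQ2 : Q * Q = Q := proj_idem' U η hUU hη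
  have hPU : P * U = η • P := proj_mul_U U η hUU hη
  have hQU : Q * U = (-η) • Q := proj_mul_U' U η hUU hη
  have hPQ : P + Q = 1 := by rw [hPdef, hQdef]; module
  -- projected exponent equalities
  have hPB := proj_exponent P U (Ebond N) (Ssum N) ((Ky / 2 : ℝ) : ℂ) η (-1) η hPU (by ring)
  have hQB := proj_exponent Q U (Ebond N) (Ssum N) ((Ky / 2 : ℝ) : ℂ) η 1 (-η) hQU (by ring)
  have hPexp := mul_exp_eq P _ _ hP2 (hPz _ hUGspin) (hPz _ (hUGferm (-1))) hPB
  have hQexp := mul_exp_eq Q _ _ hQ2 (hQz _ hUGspin) (hQz _ (hUGferm 1)) hQB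
  -- assemble
  rw [hGspin]
  simp only [Vnu, hGferm (-1), hGferm 1, hVx]
  calc NormedSpace.exp ((((Ky / 2 : ℝ) : ℂ) * η) • Ebond N + ((Ky / 2 : ℝ) : ℂ) • Ssum N) * x
        * NormedSpace.exp ((((Ky / 2 : ℝ) : ℂ) * η) • Ebond N + ((Ky / 2 : ℝ) : ℂ) • Ssum N)
      = (P + Q) * (NormedSpace.exp ((((Ky / 2 : ℝ) : ℂ) * η) • Ebond N
          + ((Ky / 2 : ℝ) : ℂ) • Ssum N) * x
        * NormedSpace.exp ((((Ky / 2 : ℝ) : ℂ) * η) • Ebond N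
          + ((Ky / 2 : ℝ) : ℂ) • Ssum N)) := by rw [hPQ, one_mul]
    _ = P * (NormedSpace.exp ((((Ky / 2 : ℝ) : ℂ) * η) • Ebond N
          + ((Ky / 2 : ℝ) : ℂ) • Ssum N) * x
        * NormedSpace.exp ((((Ky / 2 : ℝ) : ℂ) * η) • Ebond N
          + ((Ky / 2 : ℝ) : ℂ) • Ssum N))
        + Q * (NormedSpace.exp ((((Ky / 2 : ℝ) : ℂ) * η) • Ebond N
          + ((Ky / 2 : ℝ) : ℂ) • Ssum N) * x
        * NormedSpace.exp ((((Ky / 2 : ℝ) : ℂ) * η) • Ebond N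
          + ((Ky / 2 : ℝ) : ℂ) • Ssum N)) := add_mul _ _ _
    _ = P * (NormedSpace.exp ((-(((Ky / 2 : ℝ) : ℂ) * (-1))) • (U * Ebond N)
          + ((Ky / 2 : ℝ) : ℂ) • Ssum N) * x
        * NormedSpace.exp ((-(((Ky / 2 : ℝ) : ℂ) * (-1))) • (U * Ebond N)
          + ((Ky / 2 : ℝ) : ℂ) • Ssum N))
        + Q * (NormedSpace.exp ((-(((Ky / 2 : ℝ) : ℂ) * 1)) • (U * Ebond N)
          + ((Ky / 2 : ℝ) : ℂ) • Ssum N) * x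
        * NormedSpace.exp ((-(((Ky / 2 : ℝ) : ℂ) * 1)) • (U * Ebond N)
          + ((Ky / 2 : ℝ) : ℂ) • Ssum N)) := by
        rw [proj_conj P _ _ x (hPz _ hUGspin) (hPz _ (hUGferm (-1))) (hPz _ hUx) hPexp,
          proj_conj Q _ _ x (hQz _ hUGspin) (hQz _ (hUGferm 1)) (hQz _ hUx) hQexp]
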